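/- Let p be a prime, n, m ≥ 1, and S = GR(p^n,m) = (ZMod (p^n))[X]/(f) for a monic basic irreducible f of degree m. Let α_1, …, α_N ∈ S with α_i − α_j a unit for all i ≠ j, let v_1, …, v_N be units of S, and let 1 ≤ k < N. Define units v'_i := v_i⁻¹ · ∏_{j ≠ i} (α_i − α_j)⁻¹. Then the dual code of GRS_v(N,k) with respect to the standard Euclidean inner product on S^N equals GRS_{v'}(N, N−k), the generalized Reed–Solomon code with the same evaluation points and multipliers v'. -/

import Mathlib

open Polynomial Finset Matrix

namespace GRSAux

variable {A : Type*} [CommRing A] {N : ℕ}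

lemma Q_monic (α : Fin N → A) (i : Fin N) :
    (∏ j ∈ univ.erase i, (X - C (α j))).Monic :=
  monic_prod_of_monic _ _ fun _ _ => monic_X_sub_C _

lemma Q_natDegree [Nontrivial A] (α : Fin N → A) (i : Fin N) :
    (∏ j ∈ univ.erase i, (X - C (α j))).natDegree = N - 1 := by
  rw [natDegree_prod_of_monic _ _ fun j _ => monic_X_sub_C _]
  simp [Finset.card_erase_of_mem, natDegree_X_sub_C, natDegree_X]

lemma Q_eval_self (α : Fin N → A) (i : Fin N) :
    (∏ j ∈ univ.erase i, (X - C (α j))).eval (α i) = ∏ j ∈ univ.erase i, (α i - α j) := by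
  simp [eval_prod]

lemma Q_eval_ne (α : Fin N → A) (i t : Fin N) (h : t ≠ i) :
    (∏ j ∈ univ.erase i, (X - C (α j))).eval (α t) = 0 := by
  rw [eval_prod]
  exact Finset.prod_eq_zero (Finset.mem_erase.mpr ⟨h, mem_univ t⟩) (by simp)

lemma w_mul_prod (α : Fin N → A) (hα : ∀ i j, i ≠ j → IsUnit (α i - α j)) (i : Fin N) :
    (∏ j ∈ univ.erase i, Ring.inverse (α i - α j)) * ∏ j ∈ univ.erase i, (α i - α j) = 1 := by
  rw [← Finset.prod_mul_distrib]
  refine Finset.prod_eq_one fun j hj => ?_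
  exact Ring.inverse_mul_cancel _ (hα i j (Finset.mem_erase.mp hj).1.symm)

lemma deg_comb [Nontrivial A] (hN : 0 < N) (α : Fin N → A) (c : Fin N → A) :
    (∑ i, C (c i) * ∏ j ∈ univ.erase i, (X - C (α j))).degree < (N : ℕ) := by
  refine lt_of_le_of_lt (degree_sum_le _ _) ?_
  rw [Finset.sup_lt_iff (by exact_mod_cast WithBot.bot_lt_coe N)]
  intro i _
  refine lt_of_le_of_lt (degree_mul_le _ _) ?_
  have h1 : (∏ j ∈ univ.erase i, (X - C (α j))).degree ≤ ((N - 1 : ℕ) : WithBot ℕ) :=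
    degree_le_natDegree.trans_eq (by rw [Q_natDegree α i])
  refine lt_of_le_of_lt (add_le_add degree_C_le h1) ?_
  rw [zero_add]
  exact_mod_cast Nat.sub_lt hN one_pos

lemma eval_all_zero (α : Fin N → A) (hα : ∀ i j, i ≠ j → IsUnit (α i - α j))
    (q : Polynomial A) (hq : q.degree < (N : ℕ)) (h0 : ∀ i, q.eval (α i) = 0) : q = 0 := by
  have hdet : IsUnit (Matrix.vandermonde α).det := by
    rw [Matrix.det_vandermonde]
    refine Finset.prod_induction _ IsUnit (fun a b ha hb => ha.mul hb) isUnit_one ?_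
    intro i _
    refine Finset.prod_induction _ IsUnit (fun a b ha hb => ha.mul hb) isUnit_one ?_
    intro j hj
    exact hα j i (Finset.mem_Ioi.mp hj).ne'
  have hnd : q.natDegree < N ∨ q = 0 := by
    rcases eq_or_ne q 0 with h | h
    · exact Or.inr h
    · exact Or.inl (by exact_mod_cast (Polynomial.degree_eq_natDegree h ▸ hq))
  rcases hnd with hnd | h; swap; · exact h
  have hc : (Matrix.vandermonde α).mulVec (fun j => q.coeff j) = 0 := by
    funext i
    have := Polynomial.eval_eq_sum_range' (lt_of_lt_of_le hnd le_rfl) (α i)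
    simp only [Matrix.mulVec, dotProduct, Matrix.vandermonde, Pi.zero_apply]
    rw [← h0 i, this, Finset.sum_range fun j => q.coeff j * α i ^ j]
    simp [Matrix.of_apply, mul_comm]
  have hc0 : (fun j : Fin N => q.coeff j) = 0 := by
    have h1 : (Matrix.vandermonde α)⁻¹ * Matrix.vandermonde α = 1 :=
      Matrix.nonsing_inv_mul _ hdet
    calc (fun j : Fin N => q.coeff j)
        = ((Matrix.vandermonde α)⁻¹ * Matrix.vandermonde α) *ᵥ (fun j => q.coeff j) := by
          rw [h1, Matrix.one_mulVec]
      _ = (Matrix.vandermonde α)⁻¹ *ᵥ ((Matrix.vandermonde α) *ᵥ (fun j => q.coeff j)) := by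
          rw [← Matrix.mulVec_mulVec]
      _ = 0 := by rw [hc, Matrix.mulVec_zero]
  ext s
  by_cases hs : s < N
  · simpa using congrFun hc0 ⟨s, hs⟩
  · simp [Polynomial.coeff_eq_zero_of_degree_lt
      (lt_of_lt_of_le hq (by exact_mod_cast Nat.le_of_not_lt hs))]

lemma interp [Nontrivial A] (hN : 0 < N) (α : Fin N → A)
    (hα : ∀ i j, i ≠ j → IsUnit (α i - α j)) (u : Polynomial A) (hu : u.degree < (N : ℕ)) :
    u = ∑ i, C (u.eval (α i) * ∏ j ∈ univ.erase i, Ring.inverse (α i - α j)) *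
      ∏ j ∈ univ.erase i, (X - C (α j)) := by
  set R := ∑ i, C (u.eval (α i) * ∏ j ∈ univ.erase i, Ring.inverse (α i - α j)) *
      ∏ j ∈ univ.erase i, (X - C (α j)) with hR
  have hdegR : R.degree < (N : ℕ) := deg_comb hN α _
  have h0 : ∀ t, (u - R).eval (α t) = 0 := by
    intro t
    rw [eval_sub, hR, eval_finset_sum]
    rw [Finset.sum_eq_single t]
    · rw [eval_mul, eval_C, Q_eval_self, mul_assoc, w_mul_prod α hα, mul_one, sub_self]
    · intro i _ hit
      rw [eval_mul, Q_eval_ne α i t (Ne.symm hit), mul_zero]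
    · intro h; exact absurd (mem_univ t) h
  exact sub_eq_zero.mp
    (eval_all_zero α hα (u - R) (lt_of_le_of_lt (degree_sub_le _ _) (max_lt hu hdegR)) h0)

lemma Lcoeff [Nontrivial A] (hN : 0 < N) (α : Fin N → A)
    (hα : ∀ i j, i ≠ j → IsUnit (α i - α j)) (u : Polynomial A) (hu : u.degree < (N : ℕ)) :
    ∑ i, u.eval (α i) * ∏ j ∈ univ.erase i, Ring.inverse (α i - α j) = u.coeff (N - 1) := by
  conv_rhs => rw [interp hN α hα u hu]
  rw [finset_sum_coeff]
  refine (Finset.sum_congr rfl fun i _ => ?_).symm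
  rw [coeff_C_mul]
  have : (∏ j ∈ univ.erase i, (X - C (α j))).coeff (N - 1) = 1 := by
    have := (Q_monic α i).coeff_natDegree
    rwa [Q_natDegree α i] at this
  rw [this, mul_one]

lemma mul_coeff_zero (g q : Polynomial A) {a b : ℕ} (hg : g.degree < (a : ℕ))
    (hq : q.degree < (b : ℕ)) {s : ℕ} (hs : a + b - 1 ≤ s) : (g * q).coeff s = 0 := by
  rw [coeff_mul]
  refine Finset.sum_eq_zero fun p hp => ?_
  rw [Finset.HasAntidiagonal.mem_antidiagonal] at hp
  by_cases h : p.1 < a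
  · have hb : b ≤ p.2 := by omega
    rw [coeff_eq_zero_of_degree_lt (lt_of_lt_of_le hq (by exact_mod_cast hb)), mul_zero]
  · rw [coeff_eq_zero_of_degree_lt
      (lt_of_lt_of_le hg (by exact_mod_cast Nat.le_of_not_lt h)), zero_mul]

end GRSAux
open GRSAux



/-- The evaluation (encoding) map of a generalized Reed–Solomon code: it sends a polynomial
of degree `< k` to the vector of its scaled evaluations at the points `α i`. -/
noncomputable def GRSmap (A : Type*) [CommRing A] {N : ℕ} (k : ℕ) (α v : Fin N → A) :
    Polynomial.degreeLT A k →ₗ[A] (Fin N → A) where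
  toFun f i := v i * Polynomial.eval (α i) (f : Polynomial A)
  map_add' f g := by funext i; simp [mul_add]
  map_smul' c f := by funext i; simp [Polynomial.eval_smul]; ring

/-- The dual code of a linear code `C ⊆ A^N` with respect to the standard Euclidean inner
product. -/
def dualCode (A : Type*) [CommRing A] {N : ℕ} (C : Submodule A (Fin N → A)) :
    Submodule A (Fin N → A) where
  carrier := {x | ∀ c ∈ C, ∑ i, x i * c i = 0}
  add_mem' := by
    intro a b ha hb c hc
    simp only [Set.mem_setOf_eq] at *
    simp [add_mul, Finset.sum_add_distrib, ha c hc, hb c hc]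
  zero_mem' := by intro c hc; simp
  smul_mem' := by
    intro r x hx c hc
    simp only [Set.mem_setOf_eq, Pi.smul_apply, smul_eq_mul, mul_assoc, ← Finset.mul_sum]
    simp [hx c hc]

/-- Over the Galois ring `S = GR(p^n, m)`, the Euclidean dual of the
generalized Reed–Solomon code `GRS_v(N, k)` is the generalized Reed–Solomon code
`GRS_{v'}(N, N - k)` with the same evaluation points and multipliers
`v' i = (v i)⁻¹ ∏_{j ≠ i} (α i - α j)⁻¹`. -/
theorem GRS_dual_over_galois_ring (p n m : ℕ) (hp : p.Prime) (hn : 0 < n) (hm : 0 < m)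
    (f : Polynomial (ZMod (p ^ n))) (hf : f.Monic) (hdeg : f.natDegree = m)
    (hirr : Irreducible (f.map (ZMod.castHom (dvd_pow_self p hn.ne') (ZMod p))))
    (N k : ℕ) (hk1 : 1 ≤ k) (hkN : k < N)
    (α v : Fin N → AdjoinRoot f)
    (hα : ∀ i j, i ≠ j → IsUnit (α i - α j)) (hv : ∀ i, IsUnit (v i)) :
    dualCode (AdjoinRoot f) (LinearMap.range (GRSmap (AdjoinRoot f) k α v)) =
      LinearMap.range (GRSmap (AdjoinRoot f) (N - k) α
        (fun i => Ring.inverse (v i) *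
          ∏ j ∈ Finset.univ.erase i, Ring.inverse (α i - α j))) := by
  classical
  haveI : Fact (1 < p ^ n) := ⟨Nat.one_lt_pow hn.ne' hp.one_lt⟩
  haveI : Nontrivial (AdjoinRoot f) := by
    rcases subsingleton_or_nontrivial (AdjoinRoot f) with hs | hn'
    · exact absurd (Subsingleton.elim _ _)
        ((AdjoinRoot.powerBasis' hf).basis.ne_zero ⟨0, show 0 < f.natDegree from hdeg ▸ hm⟩)
    · exact hn'
  have hN : 0 < N := lt_trans (lt_of_lt_of_le Nat.zero_lt_one hk1) hkN
  set w : Fin N → (AdjoinRoot f) := fun i => ∏ j ∈ univ.erase i, Ring.inverse (α i - α j) with hw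
  ext x
  constructor
  · -- dual ⊆ GRS_{v'}
    intro hx
    have hx' : ∀ c ∈ LinearMap.range (GRSmap (AdjoinRoot f) k α v), ∑ i, x i * c i = 0 := hx
    -- dual conditions for monomials
    have Ct : ∀ t, t < k → ∑ i, x i * (v i * α i ^ t) = 0 := by
      intro t ht
      have hmem : (X : Polynomial (AdjoinRoot f)) ^ t ∈ degreeLT (AdjoinRoot f) k := by
        rw [mem_degreeLT, degree_X_pow]
        exact_mod_cast ht
      have := hx' (GRSmap (AdjoinRoot f) k α v ⟨X ^ t, hmem⟩) ⟨⟨X ^ t, hmem⟩, rfl⟩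
      simpa [GRSmap, eval_pow] using this
    set h : Polynomial (AdjoinRoot f) := ∑ i, C (x i * v i) * ∏ j ∈ univ.erase i, (X - C (α j)) with hh
    have hdegh : h.degree < (N : ℕ) := deg_comb hN α _
    have heval : ∀ t, h.eval (α t) = x t * v t * ∏ j ∈ univ.erase t, (α t - α j) := by
      intro t
      rw [hh, eval_finset_sum, Finset.sum_eq_single t]
      · rw [eval_mul, eval_C, Q_eval_self]
      · intro i _ hit
        rw [eval_mul, Q_eval_ne α i t (Ne.symm hit), mul_zero]
      · intro hmem; exact absurd (mem_univ t) hmem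
    have key : ∀ t, (Ring.inverse (v t) * w t) * h.eval (α t) = x t := by
      intro t
      rw [heval t]
      calc (Ring.inverse (v t) * w t) * (x t * v t * ∏ j ∈ univ.erase t, (α t - α j))
          = x t * (Ring.inverse (v t) * v t) * (w t * ∏ j ∈ univ.erase t, (α t - α j)) := by
            ring
        _ = x t := by
            rw [Ring.inverse_mul_cancel _ (hv t), hw, w_mul_prod α hα t, mul_one, mul_one]
    have coeff_h : ∀ t, t < k → h.coeff (N - 1 - t) = 0 := by
      intro t
      induction t using Nat.strong_induction_on with
      | _ t IH =>
        intro htk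
        have hcoeffs : ∀ s, N - t ≤ s → h.coeff s = 0 := by
          intro s hs
          by_cases hsN : N ≤ s
          · exact coeff_eq_zero_of_degree_lt (lt_of_lt_of_le hdegh (by exact_mod_cast hsN))
          · have h1 : s = N - 1 - (N - 1 - s) := by omega
            rw [h1]
            exact IH (N - 1 - s) (by omega) (by omega)
        have hXh : ((X : Polynomial (AdjoinRoot f)) ^ t * h).degree < (N : ℕ) := by
          rw [degree_lt_iff_coeff_zero]
          intro s hsN
          have hsN' : N ≤ s := by exact_mod_cast hsN
          have hts : t ≤ s := le_trans (le_of_lt (lt_trans htk hkN)) hsN'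
          have h1 : s = (s - t) + t := by omega
          rw [h1, coeff_X_pow_mul]
          exact hcoeffs _ (by omega)
        have hL := Lcoeff hN α hα (X ^ t * h) hXh
        have hterm : ∀ i, ((X : Polynomial (AdjoinRoot f)) ^ t * h).eval (α i) * w i
            = x i * (v i * α i ^ t) := by
          intro i
          rw [eval_mul, eval_pow, eval_X, heval i]
          calc α i ^ t * (x i * v i * ∏ j ∈ univ.erase i, (α i - α j)) * w i
              = x i * (v i * α i ^ t) * (w i * ∏ j ∈ univ.erase i, (α i - α j)) := by ring
            _ = x i * (v i * α i ^ t) := by rw [hw, w_mul_prod α hα i, mul_one]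
        rw [Finset.sum_congr rfl fun i _ => hterm i, Ct t htk] at hL
        have hN1 : N - 1 = (N - 1 - t) + t := by omega
        rw [hN1, coeff_X_pow_mul] at hL
        exact hL.symm
    have hmem : h ∈ degreeLT (AdjoinRoot f) (N - k) := by
      rw [mem_degreeLT, degree_lt_iff_coeff_zero]
      intro s hs
      have hs' : N - k ≤ s := by exact_mod_cast hs
      by_cases hsN : N ≤ s
      · exact coeff_eq_zero_of_degree_lt (lt_of_lt_of_le hdegh (by exact_mod_cast hsN))
      · have h1 : s = N - 1 - (N - 1 - s) := by omega
        rw [h1]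
        exact coeff_h (N - 1 - s) (by omega)
    refine ⟨⟨h, hmem⟩, ?_⟩
    funext i
    exact key i
  · -- GRS_{v'} ⊆ dual
    rintro ⟨g, rfl⟩ c ⟨q, rfl⟩
    have hg : (g : Polynomial (AdjoinRoot f)).degree < ((N - k : ℕ) : WithBot ℕ) := mem_degreeLT.mp g.2
    have hq : (q : Polynomial (AdjoinRoot f)).degree < ((k : ℕ) : WithBot ℕ) := mem_degreeLT.mp q.2
    have hdegmul : ((g : Polynomial (AdjoinRoot f)) * (q : Polynomial (AdjoinRoot f))).degree < (N : ℕ) := by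
      rw [degree_lt_iff_coeff_zero]
      intro s hs
      exact mul_coeff_zero _ _ hg hq (by
        have : N ≤ s := by exact_mod_cast hs
        omega)
    have hterm : ∀ i, (Ring.inverse (v i) * w i * (g : Polynomial (AdjoinRoot f)).eval (α i)) *
        (v i * (q : Polynomial (AdjoinRoot f)).eval (α i))
        = ((g : Polynomial (AdjoinRoot f)) * (q : Polynomial (AdjoinRoot f))).eval (α i) * w i := by
      intro i
      rw [eval_mul]
      calc Ring.inverse (v i) * w i * Polynomial.eval (α i) (g : Polynomial (AdjoinRoot f)) *
            (v i * Polynomial.eval (α i) (q : Polynomial (AdjoinRoot f)))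
          = (Ring.inverse (v i) * v i) *
            (Polynomial.eval (α i) (g : Polynomial (AdjoinRoot f)) *
              Polynomial.eval (α i) (q : Polynomial (AdjoinRoot f)) * w i) := by ring
        _ = _ := by rw [Ring.inverse_mul_cancel _ (hv i), one_mul]
    show ∑ i, _ = 0
    calc ∑ i, (Ring.inverse (v i) * w i * (g : Polynomial (AdjoinRoot f)).eval (α i)) *
          (v i * (q : Polynomial (AdjoinRoot f)).eval (α i))
        = ∑ i, ((g : Polynomial (AdjoinRoot f)) * (q : Polynomial (AdjoinRoot f))).eval (α i) * w i :=
          Finset.sum_congr rfl fun i _ => hterm i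
      _ = ((g : Polynomial (AdjoinRoot f)) * (q : Polynomial (AdjoinRoot f))).coeff (N - 1) := Lcoeff hN α hα _ hdegmul
      _ = 0 := mul_coeff_zero _ _ hg hq (by omega)
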